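/- In a finite MDP, if μ₀ is limit-sure eventually synchronizing in T with support in U, then either μ₀ is sure eventually synchronizing in T, or for every k ≥ 0, μ₀ is limit-sure eventually synchronizing in R = Pre^k(T) with support in Z = Pre^k(U); in particular, the quantitative transfer holds: if M^α_n(T) ≥ 1 − ε and M^α_n(U) = 1 with n ≥ k, then M^α_{n−k}(Pre^k(T)) ≥ 1 − ε/η^k and M^α_{n−k}(Pre^k(U)) = 1, where η is the minimum positive transition probability. -/

import Mathlib

open Finset

structure MDP (Q A : Type) [Fintype Q] [Fintype A] where
  δ : Q → A → Q → ℝ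
  nonneg : ∀ q a q', 0 ≤ δ q a q'
  sum_one : ∀ q a, ∑ q', δ q a q' = 1

structure Strat (Q A : Type) [Fintype A] where
  σ : List Q → A → ℝ
  nonneg : ∀ h a, 0 ≤ σ h a
  sum_one : ∀ h, ∑ a, σ h a = 1

variable {Q A : Type} [Fintype Q] [DecidableEq Q] [Fintype A]

/-- Probability of a path of length `n` (i.e. `n+1` states) from initial
distribution `μ0` under strategy `α`. The history passed to the strategy is
the list of visited states, most recent first. -/
noncomputable def pathProb (M : MDP Q A) (μ0 : Q → ℝ) (α : Strat Q A)
    {n : ℕ} (π : Fin (n + 1) → Q) : ℝ :=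
  μ0 (π 0) *
    ∏ i : Fin n,
      ∑ a,
        α.σ (List.ofFn (fun j : Fin (i.1 + 1) =>
            π ⟨i.1 - j.1, lt_of_le_of_lt (Nat.sub_le i.1 j.1) (Nat.lt_succ_of_lt i.isLt)⟩)) a *
          M.δ (π i.castSucc) a (π i.succ)

/-- Distribution over states after `n` steps. -/
noncomputable def Mdist (M : MDP Q A) (μ0 : Q → ℝ) (α : Strat Q A) (n : ℕ) (q : Q) : ℝ :=
  ∑ π : Fin (n + 1) → Q, if π (Fin.last n) = q then pathProb M μ0 α π else 0

/-- Probability mass in `T` after `n` steps. -/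
noncomputable def Mmass (M : MDP Q A) (μ0 : Q → ℝ) (α : Strat Q A) (n : ℕ) (T : Finset Q) : ℝ :=
  ∑ q ∈ T, Mdist M μ0 α n q

open scoped Classical in
/-- Support of the transition `δ(q,a)`. -/
noncomputable def post (M : MDP Q A) (q : Q) (a : A) : Finset Q :=
  Finset.univ.filter (fun q' => 0 < M.δ q a q')

open scoped Classical in
/-- One-step predecessor operator. -/
noncomputable def PreM (M : MDP Q A) (S : Finset Q) : Finset Q :=
  Finset.univ.filter (fun q => ∃ a, post M q a ⊆ S)

def IsDist (μ : Q → ℝ) : Prop := (∀ q, 0 ≤ μ q) ∧ ∑ q, μ q = 1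

def dirac (q0 : Q) : Q → ℝ := fun q => if q = q0 then (1 : ℝ) else 0

def PureStrat (α : Strat Q A) : Prop := ∀ h, ∃ a, α.σ h a = 1


set_option linter.unusedSectionVars false

section Lemmas
variable (M : MDP Q A) (μ0 : Q → ℝ) (α : Strat Q A)

lemma pathProb_nonneg (hμ0 : ∀ q, 0 ≤ μ0 q) {n : ℕ} (π : Fin (n+1) → Q) :
    0 ≤ pathProb M μ0 α π := by
  unfold pathProb
  apply mul_nonneg (hμ0 _)
  apply Finset.prod_nonneg
  intro i _
  apply Finset.sum_nonneg
  intro a _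
  exact mul_nonneg (α.nonneg _ _) (M.nonneg _ _ _)

lemma snoc_lt {n : ℕ} (π : Fin (n+1) → Q) (q : Q) (m : ℕ) (hm2 : m < n+2) (hm : m < n+1) :
    (Fin.snoc π q : Fin (n+2) → Q) ⟨m, hm2⟩ = π ⟨m, hm⟩ := by
  have h : (⟨m, hm2⟩ : Fin (n+2)) = Fin.castSucc ⟨m, hm⟩ := rfl
  rw [h, Fin.snoc_castSucc]

lemma pathProb_snoc {n : ℕ} (π : Fin (n+1) → Q) (q : Q) :
    pathProb M μ0 α (Fin.snoc π q) =
      pathProb M μ0 α π *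
        ∑ a, α.σ (List.ofFn (fun j : Fin (n+1) =>
            π ⟨n - j.1, Nat.lt_succ_of_le (Nat.sub_le n j.1)⟩)) a *
          M.δ (π (Fin.last n)) a q := by
  unfold pathProb
  rw [Fin.prod_univ_castSucc]
  have h0 : (Fin.snoc π q : Fin (n+2) → Q) 0 = π 0 := snoc_lt π q 0 (by omega) (by omega)
  rw [h0, mul_assoc]
  congr 1
  congr 1
  · refine Finset.prod_congr rfl fun i _ => ?_
    refine Finset.sum_congr rfl fun a _ => ?_
    congr 1
    · exact congrArg (fun l => α.σ l a)
        (congrArg List.ofFn (funext fun j => snoc_lt π q (i.1 - j.1) (by omega) (by omega)))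
    · rw [show ((Fin.castSucc i).castSucc : Fin (n+2)) = ⟨i.1, by omega⟩ from rfl,
          show ((Fin.castSucc i).succ : Fin (n+2)) = ⟨i.1 + 1, by omega⟩ from rfl,
          snoc_lt π q i.1 (by omega) (by omega),
          snoc_lt π q (i.1+1) (by omega) (by omega)]
      rfl
  · refine Finset.sum_congr rfl fun a _ => ?_
    congr 1
    · exact congrArg (fun l => α.σ l a)
        (congrArg List.ofFn (funext fun j => snoc_lt π q (n - j.1) (by omega) (by omega)))
    · rw [show ((Fin.last n).castSucc : Fin (n+2)) = ⟨n, by omega⟩ from rfl,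
          snoc_lt π q n (by omega) (by omega), Fin.succ_last, Fin.snoc_last]
      rfl

/-- One-step transition weight given full history `π`. -/
noncomputable def stepW {n : ℕ} (π : Fin (n+1) → Q) (q : Q) : ℝ :=
  ∑ a, α.σ (List.ofFn (fun j : Fin (n+1) =>
      π ⟨n - j.1, Nat.lt_succ_of_le (Nat.sub_le n j.1)⟩)) a * M.δ (π (Fin.last n)) a q

lemma pathProb_snoc' {n : ℕ} (π : Fin (n+1) → Q) (q : Q) :
    pathProb M μ0 α (Fin.snoc π q) = pathProb M μ0 α π * stepW M α π q :=
  pathProb_snoc M μ0 α π q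

lemma stepW_nonneg {n : ℕ} (π : Fin (n+1) → Q) (q : Q) : 0 ≤ stepW M α π q :=
  Finset.sum_nonneg fun a _ => mul_nonneg (α.nonneg _ _) (M.nonneg _ _ _)

lemma sum_stepW {n : ℕ} (π : Fin (n+1) → Q) : ∑ q, stepW M α π q = 1 := by
  unfold stepW
  rw [Finset.sum_comm]
  simp only [← Finset.mul_sum, M.sum_one, mul_one]
  exact α.sum_one _

/-- Sum over paths of length n+1 decomposes via snoc. -/
lemma sum_snoc {n : ℕ} (f : (Fin (n+2) → Q) → ℝ) :
    ∑ π : Fin (n+2) → Q, f π = ∑ π : Fin (n+1) → Q, ∑ q, f (Fin.snoc π q) := by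
  have hbij : Function.Bijective (fun p : (Fin (n+1) → Q) × Q => (Fin.snoc p.1 p.2 : Fin (n+2) → Q)) := by
    constructor
    · intro p p' h
      dsimp only at h
      have h1 := congrArg Fin.init h
      have h2 := congrArg (fun g : Fin (n+2) → Q => g (Fin.last (n+1))) h
      simp only [Fin.init_snoc, Fin.snoc_last] at h1 h2
      exact Prod.ext h1 h2
    · intro g
      exact ⟨(Fin.init g, g (Fin.last _)), Fin.snoc_init_self g⟩
  calc ∑ π : Fin (n+2) → Q, f π
      = ∑ p : (Fin (n+1) → Q) × Q, f (Fin.snoc p.1 p.2) :=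
        (Fintype.sum_bijective _ hbij _ f (fun _ => rfl)).symm
    _ = _ := Fintype.sum_prod_type _

lemma Mdist_succ {n : ℕ} (q : Q) :
    Mdist M μ0 α (n+1) q = ∑ π : Fin (n+1) → Q, pathProb M μ0 α π * stepW M α π q := by
  unfold Mdist
  rw [sum_snoc]
  refine Finset.sum_congr rfl fun π _ => ?_
  have : ∀ q' : Q, (Fin.snoc π q' : Fin (n+2) → Q) (Fin.last (n+1)) = q' := fun q' =>
    Fin.snoc_last _ _
  simp only [this, pathProb_snoc' M μ0 α π]
  rw [Finset.sum_ite_eq' Finset.univ q (fun q' => pathProb M μ0 α π * stepW M α π q')]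
  simp

lemma Mdist_zero (q : Q) : Mdist M μ0 α 0 q = μ0 q := by
  unfold Mdist
  rw [← Equiv.sum_comp (Equiv.funUnique (Fin 1) Q).symm
    (fun π : Fin (0+1) → Q => if π (Fin.last 0) = q then pathProb M μ0 α π else 0)]
  simp [pathProb, Equiv.funUnique]

lemma Mdist_nonneg (hμ0 : ∀ q, 0 ≤ μ0 q) (n : ℕ) (q : Q) : 0 ≤ Mdist M μ0 α n q := by
  unfold Mdist
  apply Finset.sum_nonneg
  intro π _
  split
  · exact pathProb_nonneg M μ0 α hμ0 π
  · exact le_refl _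

lemma sum_Mdist (hμ0 : IsDist μ0) (n : ℕ) : ∑ q, Mdist M μ0 α n q = 1 := by
  induction n with
  | zero => simp only [Mdist_zero]; exact hμ0.2
  | succ n ih =>
    simp only [Mdist_succ]
    rw [Finset.sum_comm]
    simp only [← Finset.mul_sum, sum_stepW, mul_one]
    calc ∑ π : Fin (n+1) → Q, pathProb M μ0 α π
        = ∑ q, Mdist M μ0 α n q := by
          unfold Mdist
          rw [Finset.sum_comm]
          refine Finset.sum_congr rfl fun π _ => ?_
          rw [Finset.sum_ite_eq Finset.univ (π (Fin.last n)) (fun _ => pathProb M μ0 α π)]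
          simp
      _ = 1 := ih

lemma Mmass_path {n : ℕ} (W : Finset Q) :
    Mmass M μ0 α n W = ∑ π : Fin (n+1) → Q,
      if π (Fin.last n) ∈ W then pathProb M μ0 α π else 0 := by
  unfold Mmass Mdist
  rw [Finset.sum_comm]
  refine Finset.sum_congr rfl fun π _ => ?_
  rw [Finset.sum_ite_eq W (π (Fin.last n)) (fun _ => pathProb M μ0 α π)]

lemma Mmass_compl (hμ0 : IsDist μ0) (n : ℕ) (W : Finset Q) :
    Mmass M μ0 α n Wᶜ = 1 - Mmass M μ0 α n W := by
  have := Finset.sum_add_sum_compl W (Mdist M μ0 α n)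
  rw [sum_Mdist M μ0 α hμ0 n] at this
  unfold Mmass
  linarith

lemma Mmass_le_one (hμ0 : IsDist μ0) (n : ℕ) (W : Finset Q) :
    Mmass M μ0 α n W ≤ 1 := by
  have h := Mmass_compl M μ0 α hμ0 n W
  have : 0 ≤ Mmass M μ0 α n Wᶜ :=
    Finset.sum_nonneg fun q _ => Mdist_nonneg M μ0 α hμ0.1 n q
  linarith

lemma Mmass_nonneg (hμ0 : IsDist μ0) (n : ℕ) (W : Finset Q) :
    0 ≤ Mmass M μ0 α n W :=
  Finset.sum_nonneg fun q _ => Mdist_nonneg M μ0 α hμ0.1 n q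

lemma stepW_out (η : ℝ) (hδ : ∀ q a q', 0 < M.δ q a q' → η ≤ M.δ q a q')
    (S : Finset Q) {n : ℕ} (π : Fin (n+1) → Q)
    (h : π (Fin.last n) ∉ PreM M S) :
    η ≤ ∑ q ∈ Sᶜ, stepW M α π q := by
  unfold stepW
  rw [Finset.sum_comm]
  have key : ∀ a : A, η ≤ ∑ q ∈ Sᶜ, M.δ (π (Fin.last n)) a q := by
    intro a
    have hpost : ¬ post M (π (Fin.last n)) a ⊆ S := by
      intro hc
      exact h (by simp only [PreM, Finset.mem_filter, Finset.mem_univ, true_and]; exact ⟨a, hc⟩)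
    obtain ⟨q', hq'post, hq'S⟩ := Finset.not_subset.mp hpost
    have hq'pos : 0 < M.δ (π (Fin.last n)) a q' := by
      simpa [post] using hq'post
    calc η ≤ M.δ (π (Fin.last n)) a q' := hδ _ _ _ hq'pos
      _ ≤ ∑ q ∈ Sᶜ, M.δ (π (Fin.last n)) a q :=
        Finset.single_le_sum (f := fun q => M.δ (π (Fin.last n)) a q)
          (fun q _ => M.nonneg _ _ _) (Finset.mem_compl.mpr hq'S)
  calc η = ∑ a, α.σ (List.ofFn (fun j : Fin (n+1) =>
        π ⟨n - j.1, Nat.lt_succ_of_le (Nat.sub_le n j.1)⟩)) a * η := by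
        rw [← Finset.sum_mul, α.sum_one, one_mul]
    _ ≤ _ := Finset.sum_le_sum fun a _ => by
        rw [← Finset.mul_sum]
        exact mul_le_mul_of_nonneg_left (key a) (α.nonneg _ _)

lemma mass_step (hμ0 : IsDist μ0) {η : ℝ} (hη : 0 ≤ η)
    (hδ : ∀ q a q', 0 < M.δ q a q' → η ≤ M.δ q a q')
    (S : Finset Q) (n : ℕ) :
    η * (1 - Mmass M μ0 α n (PreM M S)) ≤ 1 - Mmass M μ0 α (n+1) S := by
  rw [← Mmass_compl M μ0 α hμ0 n (PreM M S), ← Mmass_compl M μ0 α hμ0 (n+1) S]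
  have hR : Mmass M μ0 α (n+1) Sᶜ
      = ∑ π : Fin (n+1) → Q, pathProb M μ0 α π * ∑ q ∈ Sᶜ, stepW M α π q := by
    unfold Mmass
    simp only [Mdist_succ]
    rw [Finset.sum_comm]
    exact Finset.sum_congr rfl fun π _ => (Finset.mul_sum _ _ _).symm
  rw [hR, Mmass_path, Finset.mul_sum]
  apply Finset.sum_le_sum
  intro π _
  by_cases hlast : π (Fin.last n) ∈ (PreM M S)ᶜ
  · rw [if_pos hlast]
    rw [mul_comm η]
    exact mul_le_mul (le_refl _) (stepW_out M α η hδ S π (Finset.mem_compl.mp hlast)) hη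
      (pathProb_nonneg M μ0 α hμ0.1 π)
  · rw [if_neg hlast, mul_zero]
    exact mul_nonneg (pathProb_nonneg M μ0 α hμ0.1 π)
      (Finset.sum_nonneg fun q _ => stepW_nonneg M α π q)

lemma mass_iter (hμ0 : IsDist μ0) {η : ℝ} (hη : 0 ≤ η)
    (hδ : ∀ q a q', 0 < M.δ q a q' → η ≤ M.δ q a q')
    (k : ℕ) : ∀ (S : Finset Q) (n : ℕ), k ≤ n →
    η ^ k * (1 - Mmass M μ0 α (n - k) ((PreM M)^[k] S)) ≤ 1 - Mmass M μ0 α n S := by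
  induction k with
  | zero => intro S n _; simp
  | succ k ih =>
    intro S n hkn
    obtain ⟨m, rfl⟩ : ∃ m, n = m + 1 := ⟨n - 1, by omega⟩
    have h1 := ih (PreM M S) m (by omega)
    have h2 := mass_step M μ0 α hμ0 hη hδ S m
    have h3 : m + 1 - (k+1) = m - k := by omega
    rw [h3, Function.iterate_succ_apply, pow_succ]
    calc η ^ k * η * (1 - Mmass M μ0 α (m - k) ((PreM M)^[k] (PreM M S)))
        = η * (η ^ k * (1 - Mmass M μ0 α (m - k) ((PreM M)^[k] (PreM M S)))) := by ring
      _ ≤ η * (1 - Mmass M μ0 α m (PreM M S)) := mul_le_mul_of_nonneg_left h1 hη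
      _ ≤ 1 - Mmass M μ0 α (m+1) S := h2

lemma Mmass_zero (W : Finset Q) : Mmass M μ0 α 0 W = ∑ q ∈ W, μ0 q := by
  unfold Mmass; simp only [Mdist_zero]

lemma sum_pathProb (hμ0 : IsDist μ0) (n : ℕ) :
    ∑ π : Fin (n+1) → Q, pathProb M μ0 α π = 1 := by
  calc ∑ π : Fin (n+1) → Q, pathProb M μ0 α π
      = ∑ q, Mdist M μ0 α n q := by
        unfold Mdist
        rw [Finset.sum_comm]
        refine Finset.sum_congr rfl fun π _ => ?_
        rw [Finset.sum_ite_eq Finset.univ (π (Fin.last n)) (fun _ => pathProb M μ0 α π)]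
        simp
    _ = 1 := sum_Mdist M μ0 α hμ0 n

lemma Mmass_succ (W : Finset Q) (n : ℕ) :
    Mmass M μ0 α (n+1) W
      = ∑ π : Fin (n+1) → Q, pathProb M μ0 α π * ∑ q ∈ W, stepW M α π q := by
  unfold Mmass
  simp only [Mdist_succ]
  rw [Finset.sum_comm]
  exact Finset.sum_congr rfl fun π _ => (Finset.mul_sum _ _ _).symm

lemma sure_reach [Nonempty A] [Nonempty Q] (hμ0 : IsDist μ0) (m : ℕ) (T : Finset Q)
    (h : ∑ q ∈ (PreM M)^[m] T, μ0 q = 1) :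
    ∃ β : Strat Q A, Mmass M μ0 β m T = 1 := by
  classical
  let act : Q → Finset Q → A := fun q S =>
    if hq : ∃ a, post M q a ⊆ S then hq.choose else Classical.arbitrary A
  have act_spec : ∀ q S, q ∈ PreM M S → post M q (act q S) ⊆ S := by
    intro q S hq
    have hex : ∃ a, post M q a ⊆ S := by
      simpa [PreM] using hq
    simp only [act, dif_pos hex]
    exact hex.choose_spec
  let β : Strat Q A :=
    { σ := fun h a =>
        if a = act (h.headD (Classical.arbitrary Q)) ((PreM M)^[m - h.length] T) then 1 else 0
      nonneg := by intro h a; split <;> norm_num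
      sum_one := by
        intro h
        rw [Finset.sum_ite_eq' Finset.univ]
        simp }
  refine ⟨β, ?_⟩
  have inv : ∀ j, j ≤ m → Mmass M μ0 β j ((PreM M)^[m - j] T) = 1 := by
    intro j
    induction j with
    | zero => intro _; rw [Mmass_zero]; simpa using h
    | succ j ihj =>
      intro hjm
      have hj := ihj (by omega)
      set W := (PreM M)^[m - j] T with hW
      set W' := (PreM M)^[m - (j+1)] T with hW'
      have hWW' : W = PreM M W' := by
        rw [hW, hW', show m - j = (m - (j+1)) + 1 by omega, Function.iterate_succ_apply']
      -- paths ending outside W have zero probability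
      have hzero : ∀ π : Fin (j+1) → Q, π (Fin.last j) ∉ W → pathProb M μ0 β π = 0 := by
        intro π hπ
        have htot := sum_pathProb M μ0 β hμ0 j
        have hsplit : ∑ π : Fin (j+1) → Q,
            (if π (Fin.last j) ∈ W then pathProb M μ0 β π else 0)
            + ∑ π : Fin (j+1) → Q,
            (if π (Fin.last j) ∈ W then 0 else pathProb M μ0 β π) = 1 := by
          rw [← Finset.sum_add_distrib, ← htot]
          exact Finset.sum_congr rfl fun π _ => by split <;> simp
        rw [← Mmass_path] at hsplit
        rw [hj] at hsplit
        have hzsum : ∑ π : Fin (j+1) → Q,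
            (if π (Fin.last j) ∈ W then 0 else pathProb M μ0 β π) = 0 := by linarith
        have := (Finset.sum_eq_zero_iff_of_nonneg (fun π _ => by
          split
          · exact le_refl _
          · exact pathProb_nonneg M μ0 β hμ0.1 π)).mp hzsum π (Finset.mem_univ π)
        simpa [hπ] using this
      -- for paths ending in W, the chosen action sends all mass to W'
      have hstep : ∀ π : Fin (j+1) → Q, π (Fin.last j) ∈ W →
          ∑ q ∈ W', stepW M β π q = 1 := by
        intro π hπ
        have hlen : (List.ofFn (fun j' : Fin (j+1) =>
            π ⟨j - j'.1, Nat.lt_succ_of_le (Nat.sub_le j j'.1)⟩)).length = j + 1 :=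
          List.length_ofFn
        have hhead : (List.ofFn (fun j' : Fin (j+1) =>
            π ⟨j - j'.1, Nat.lt_succ_of_le (Nat.sub_le j j'.1)⟩)).headD (Classical.arbitrary Q)
            = π (Fin.last j) := by
          rw [List.ofFn_succ, List.headD_cons]
          congr 1
        unfold stepW
        simp only [β, hlen, hhead, ← hW']
        have collapse : ∀ q : Q,
            (∑ a, (if a = act (π (Fin.last j)) W' then (1:ℝ) else 0) * M.δ (π (Fin.last j)) a q)
            = M.δ (π (Fin.last j)) (act (π (Fin.last j)) W') q := by
          intro q
          rw [Finset.sum_congr rfl (fun a _ => by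
            rw [ite_mul, one_mul, zero_mul])]
          rw [Finset.sum_ite_eq' Finset.univ]
          simp
        simp only [collapse]
        have hsub : post M (π (Fin.last j)) (act (π (Fin.last j)) W') ⊆ W' :=
          act_spec _ _ (hWW' ▸ hπ)
        have hvanish : ∀ q ∈ Finset.univ, q ∉ W' → M.δ (π (Fin.last j)) (act (π (Fin.last j)) W') q = 0 := by
          intro q _ hq
          by_contra hne
          have hpos : 0 < M.δ (π (Fin.last j)) (act (π (Fin.last j)) W') q :=
            lt_of_le_of_ne (M.nonneg _ _ _) (Ne.symm hne)
          exact hq (hsub (by simp [post, hpos]))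
        rw [Finset.sum_subset (Finset.subset_univ W') (fun q hq hq' => hvanish q hq hq')]
        exact M.sum_one _ _
      rw [Mmass_succ]
      calc ∑ π : Fin (j+1) → Q, pathProb M μ0 β π * ∑ q ∈ W', stepW M β π q
          = ∑ π : Fin (j+1) → Q, pathProb M μ0 β π := by
            refine Finset.sum_congr rfl fun π _ => ?_
            by_cases hπ : π (Fin.last j) ∈ W
            · rw [hstep π hπ, mul_one]
            · rw [hzero π hπ, zero_mul]
        _ = 1 := sum_pathProb M μ0 β hμ0 j
  have := inv m (le_refl m)
  simpa using this

end Lemmas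

/-- If `μ0` is limit-sure eventually synchronizing in `T` with support in `U`, then
either `μ0` is sure eventually synchronizing in `T`, or for every `k`, `μ0` is
limit-sure eventually synchronizing in `Pre^k(T)` with support in `Pre^k(U)`.
Moreover the quantitative transfer holds: if `M^α_n(T) ≥ 1 − ε` and `M^α_n(U) = 1`
with `n ≥ k`, then `M^α_{n−k}(Pre^k(T)) ≥ 1 − ε/η^k` and `M^α_{n−k}(Pre^k(U)) = 1`,
where `η` is the minimum positive transition probability. -/
theorem limit_sure_pre_transfer {Q A : Type} [Fintype Q] [DecidableEq Q]
    [Fintype A] [Nonempty Q] [Nonempty A]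
    (M : MDP Q A) (T U : Finset Q) (hTU : T ⊆ U)
    (μ0 : Q → ℝ) (hμ0 : IsDist μ0)
    (η : ℝ) (hη : 0 < η)
    (hδ : ∀ q a q', 0 < M.δ q a q' → η ≤ M.δ q a q') :
    ((∀ ε : ℝ, 0 < ε → ∃ (α : Strat Q A) (n : ℕ),
        1 - ε ≤ Mmass M μ0 α n T ∧ Mmass M μ0 α n U = 1) →
      ((∃ (α : Strat Q A) (n : ℕ), Mmass M μ0 α n T = 1) ∨
        ∀ k : ℕ, ∀ ε : ℝ, 0 < ε → ∃ (α : Strat Q A) (n : ℕ),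
          1 - ε ≤ Mmass M μ0 α n ((PreM M)^[k] T) ∧
            Mmass M μ0 α n ((PreM M)^[k] U) = 1)) ∧
    (∀ (α : Strat Q A) (n k : ℕ), k ≤ n → ∀ ε : ℝ,
      1 - ε ≤ Mmass M μ0 α n T → Mmass M μ0 α n U = 1 →
        1 - ε / η ^ k ≤ Mmass M μ0 α (n - k) ((PreM M)^[k] T) ∧
          Mmass M μ0 α (n - k) ((PreM M)^[k] U) = 1) := by
  have part2 : ∀ (α : Strat Q A) (n k : ℕ), k ≤ n → ∀ ε : ℝ,
      1 - ε ≤ Mmass M μ0 α n T → Mmass M μ0 α n U = 1 →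
        1 - ε / η ^ k ≤ Mmass M μ0 α (n - k) ((PreM M)^[k] T) ∧
          Mmass M μ0 α (n - k) ((PreM M)^[k] U) = 1 := by
    intro α n k hkn ε hT hU
    have hηk : 0 < η ^ k := pow_pos hη k
    have hTiter := mass_iter M μ0 α hμ0 hη.le hδ k T n hkn
    have hUiter := mass_iter M μ0 α hμ0 hη.le hδ k U n hkn
    constructor
    · have h1 : η ^ k * (1 - Mmass M μ0 α (n-k) ((PreM M)^[k] T)) ≤ ε :=
        le_trans hTiter (by linarith)
      have h2 : 1 - Mmass M μ0 α (n-k) ((PreM M)^[k] T) ≤ ε / η ^ k := by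
        rw [le_div_iff₀ hηk]; linarith
      linarith
    · have h1 : η ^ k * (1 - Mmass M μ0 α (n-k) ((PreM M)^[k] U)) ≤ 0 := by
        rw [hU] at hUiter; simpa using hUiter
      have h2 : Mmass M μ0 α (n-k) ((PreM M)^[k] U) ≤ 1 := Mmass_le_one M μ0 α hμ0 _ _
      nlinarith
  refine ⟨?_, part2⟩
  intro hyp
  by_cases hsure : ∃ (α : Strat Q A) (n : ℕ), Mmass M μ0 α n T = 1
  · exact Or.inl hsure
  right
  intro k ε hε
  rcases Nat.eq_zero_or_pos k with rfl | hk
  · simpa using hyp ε hε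
  have hη1 : η ≤ 1 := by
    obtain ⟨q⟩ := (inferInstance : Nonempty Q)
    obtain ⟨a⟩ := (inferInstance : Nonempty A)
    have hex : ∃ q', 0 < M.δ q a q' := by
      by_contra hc
      push_neg at hc
      have : ∑ q', M.δ q a q' = 0 :=
        Finset.sum_eq_zero fun q' _ => le_antisymm (hc q') (M.nonneg _ _ _)
      rw [M.sum_one q a] at this
      exact one_ne_zero this
    obtain ⟨q', hq'⟩ := hex
    calc η ≤ M.δ q a q' := hδ _ _ _ hq'
      _ ≤ ∑ q'', M.δ q a q'' :=
        Finset.single_le_sum (f := fun q'' => M.δ q a q'')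
          (fun q'' _ => M.nonneg _ _ _) (Finset.mem_univ q')
      _ = 1 := M.sum_one q a
  have hc_lt : ∀ m : ℕ, ∑ q ∈ (PreM M)^[m] T, μ0 q < 1 := by
    intro m
    have hle : ∑ q ∈ (PreM M)^[m] T, μ0 q ≤ 1 := by
      rw [← hμ0.2]
      exact Finset.sum_le_sum_of_subset_of_nonneg (Finset.subset_univ _)
        (fun q _ _ => hμ0.1 q)
    rcases lt_or_eq_of_le hle with hlt | heq
    · exact hlt
    · exfalso
      obtain ⟨β, hβ⟩ := sure_reach M μ0 hμ0 m T heq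
      exact hsure ⟨β, m, hβ⟩
  have hkne : (Finset.range k).Nonempty := ⟨0, Finset.mem_range.mpr hk⟩
  set ρ : ℝ := (Finset.range k).inf' hkne (fun m => 1 - ∑ q ∈ (PreM M)^[m] T, μ0 q) with hρ
  have hρpos : 0 < ρ := by
    rw [hρ, Finset.lt_inf'_iff]
    intro m _
    linarith [hc_lt m]
  have hε'pos : 0 < min (ε * η ^ k) (ρ * η ^ (k-1) / 2) :=
    lt_min (by positivity) (by positivity)
  set ε' := min (ε * η ^ k) (ρ * η ^ (k-1) / 2) with hε'
  obtain ⟨α, n, hT1, hU1⟩ := hyp ε' hε'pos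
  by_cases hnk : k ≤ n
  · obtain ⟨hA, hB⟩ := part2 α n k hnk ε' hT1 hU1
    refine ⟨α, n - k, ?_, hB⟩
    have hdiv : ε' / η ^ k ≤ ε := by
      rw [div_le_iff₀ (pow_pos hη k)]
      exact le_trans (min_le_left _ _) (le_refl _)
    linarith
  · exfalso
    push_neg at hnk
    obtain ⟨hA, _⟩ := part2 α n n le_rfl ε' hT1 hU1
    rw [Nat.sub_self, Mmass_zero] at hA
    have hpow : η ^ (k-1) ≤ η ^ n :=
      pow_le_pow_of_le_one hη.le hη1 (by omega)
    have h1 : ε' / η ^ n < ρ := by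
      rw [div_lt_iff₀ (pow_pos hη n)]
      have h3 : ε' ≤ ρ * η ^ n / 2 := by
        refine le_trans (min_le_right _ _) ?_
        have := mul_le_mul_of_nonneg_left hpow hρpos.le
        linarith
      nlinarith [pow_pos hη n, hρpos]
    have h2 : ρ ≤ 1 - ∑ q ∈ (PreM M)^[n] T, μ0 q := by
      rw [hρ]
      exact Finset.inf'_le _ (Finset.mem_range.mpr hnk)
    linarith
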